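/- Let M ∈ M₂(ℂ) with det M = 1. Then there exist A ∈ ℝ with A > 0, N ∈ ℂ, and σ, τ ∈ ℂ with |σ|² − |τ|² = 1 such that M = [[A, N], [0, A⁻¹]] · [[σ, τ], [conj(τ), conj(σ)]] if and only if |M₂₂| > |M₂₁|, i.e. the modulus of the (2,2) entry of M is strictly greater than the modulus of the (2,1) entry. -/

import Mathlib

open Matrix Complex

/-- a matrix `M ∈ SL(2,ℂ)` admits a factorization
`M = [[A, N], [0, A⁻¹]] · [[σ, τ], [conj τ, conj σ]]` with `A > 0` real,
`N ∈ ℂ` and `|σ|² − |τ|² = 1` if and only if `|M₂₂| > |M₂₁|`. -/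
theorem sb_su11_factorization_criterion (M : Matrix (Fin 2) (Fin 2) ℂ)
    (hdet : M.det = 1) :
    (∃ A : ℝ, 0 < A ∧ ∃ N σ τ : ℂ,
      ‖σ‖ ^ 2 - ‖τ‖ ^ 2 = 1 ∧
      M = !![(A : ℂ), N; 0, (A : ℂ)⁻¹] * !![σ, τ; star τ, star σ]) ↔
    ‖M 1 0‖ < ‖M 1 1‖ := by
  rw [Matrix.det_fin_two] at hdet
  constructor
  · rintro ⟨A, hA, N, σ, τ, hst, hM⟩
    have h10 : M 1 0 = (A:ℂ)⁻¹ * star τ := by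
      rw [hM]; simp [Matrix.mul_apply, Fin.sum_univ_two]
    have h11 : M 1 1 = (A:ℂ)⁻¹ * star σ := by
      rw [hM]; simp [Matrix.mul_apply, Fin.sum_univ_two]
    have hτσ : ‖τ‖ < ‖σ‖ := by
      nlinarith [norm_nonneg σ, norm_nonneg τ]
    have habsA : ‖((A:ℂ)⁻¹)‖ = A⁻¹ := by
      rw [norm_inv, Complex.norm_real, Real.norm_eq_abs, abs_of_pos hA]
    rw [h10, h11]
    simp only [norm_mul, habsA, Complex.star_def, Complex.norm_conj]
    exact mul_lt_mul_of_pos_left hτσ (inv_pos.mpr hA)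
  · intro h
    set a := M 0 0 with ha
    set b := M 0 1 with hb
    set c := M 1 0 with hc
    set d := M 1 1 with hd
    have ht : 0 < ‖d‖ ^ 2 - ‖c‖ ^ 2 := by
      nlinarith [norm_nonneg c]
    set t : ℝ := ‖d‖ ^ 2 - ‖c‖ ^ 2 with htdef
    set A : ℝ := (Real.sqrt t)⁻¹ with hAdef
    have hApos : 0 < A := by positivity
    have hA2 : A ^ 2 * t = 1 := by
      rw [hAdef, inv_pow, Real.sq_sqrt ht.le]
      exact inv_mul_cancel₀ ht.ne'
    have hA2C : (A:ℂ) ^ 2 * (d * (starRingEnd ℂ) d - c * (starRingEnd ℂ) c) = 1 := by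
      have h1 : (d : ℂ) * (starRingEnd ℂ) d = ((‖d‖ ^ 2 : ℝ) : ℂ) := by
        rw [Complex.mul_conj, Complex.sq_norm]
      have h2 : (c : ℂ) * (starRingEnd ℂ) c = ((‖c‖ ^ 2 : ℝ) : ℂ) := by
        rw [Complex.mul_conj, Complex.sq_norm]
      rw [h1, h2]
      exact_mod_cast congrArg (Complex.ofReal) hA2
    refine ⟨A, hApos, (A:ℂ) * (b * star d - a * star c),
      star ((A:ℂ) * d), star ((A:ℂ) * c), ?_, ?_⟩
    · simp only [Complex.star_def, Complex.norm_conj, norm_mul,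
        Complex.norm_real, Real.norm_eq_abs, abs_of_pos hApos]
      nlinarith [hA2]
    · have hAne : (A:ℂ) ≠ 0 := by exact_mod_cast hApos.ne'
      ext i j
      fin_cases i <;> fin_cases j <;>
        simp [Matrix.mul_apply, Fin.sum_univ_two, ← ha, ← hb, ← hc, ← hd,
          Complex.star_def, _root_.map_mul, Complex.conj_conj, Complex.conj_ofReal]
      · linear_combination ((A:ℂ)^2 * (starRingEnd ℂ) d) * hdet - a * hA2C
      · linear_combination ((A:ℂ)^2 * (starRingEnd ℂ) c) * hdet - b * hA2C
      · field_simp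
      · field_simp
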